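/- If X• is an optimal dual solution (X• ≥ z_m(λ) for all m with Tr X• = g°(λ)) and Π• is an optimal POVM for the modified problem (g(Π•; λ) = g°(λ)), then (X• − z_m(λ)) Π•_m = 0 for every m. -/

import Mathlib

open ComplexOrder

open Matrix in
lemma trace_conjTranspose_mul_self' {m n : ℕ} (E : Matrix (Fin m) (Fin n) ℂ) :
    Matrix.trace (Eᴴ * E) = ((∑ i, ∑ j, Complex.normSq (E j i) : ℝ) : ℂ) := by
  simp only [Matrix.trace, Matrix.diag, Matrix.mul_apply, Matrix.conjTranspose_apply]
  push_cast
  refine Finset.sum_congr rfl fun i _ => Finset.sum_congr rfl fun j _ => ?_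
  rw [Complex.normSq_eq_conj_mul_self]
  rfl

open scoped MatrixOrder in
open Matrix in
lemma posSemidef_exists_conjTranspose_mul_self' {n : ℕ} {A : Matrix (Fin n) (Fin n) ℂ}
    (hA : A.PosSemidef) : ∃ B : Matrix (Fin n) (Fin n) ℂ, A = Bᴴ * B := by
  obtain ⟨X, hX, -, hXX⟩ :=
    CFC.exists_sqrt_of_isSelfAdjoint_of_quasispectrumRestricts hA.isHermitian
      (QuasispectrumRestricts.nnreal_of_nonneg hA.nonneg)
  refine ⟨X, ?_⟩
  rw [← hXX]
  nth_rewrite 1 [← hX.star_eq]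
  rfl

open Matrix in
lemma psd_trace_mul {n : ℕ} {A B : Matrix (Fin n) (Fin n) ℂ}
    (hA : A.PosSemidef) (hB : B.PosSemidef) :
    ∃ r : ℝ, 0 ≤ r ∧ Matrix.trace (A * B) = (r : ℂ) ∧ (r = 0 → A * B = 0) := by
  obtain ⟨C, hC⟩ := posSemidef_exists_conjTranspose_mul_self' hA
  obtain ⟨D, hD⟩ := posSemidef_exists_conjTranspose_mul_self' hB
  have htr : Matrix.trace (A * B) = Matrix.trace ((D * Cᴴ)ᴴ * (D * Cᴴ)) := by
    have h1 : (D * Cᴴ)ᴴ * (D * Cᴴ) = C * (Dᴴ * D) * Cᴴ := by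
      simp [Matrix.conjTranspose_mul, Matrix.mul_assoc]
    rw [h1, hC, hD, Matrix.mul_assoc, Matrix.trace_mul_comm, Matrix.mul_assoc]
  refine ⟨∑ i, ∑ j, Complex.normSq ((D * Cᴴ) j i), ?_, ?_, ?_⟩
  · exact Finset.sum_nonneg fun i _ => Finset.sum_nonneg fun j _ => Complex.normSq_nonneg _
  · rw [htr, trace_conjTranspose_mul_self']
  · intro hr
    have hz : ∀ j i, Complex.normSq ((D * Cᴴ) j i) = 0 := by
      intro j i
      have h0 := (Finset.sum_eq_zero_iff_of_nonneg (fun i _ => Finset.sum_nonneg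
        (fun j _ => Complex.normSq_nonneg _))).mp hr i (Finset.mem_univ i)
      exact (Finset.sum_eq_zero_iff_of_nonneg
        (fun j _ => Complex.normSq_nonneg _)).mp h0 j (Finset.mem_univ j)
    have hDC : D * Cᴴ = 0 := by
      ext j i
      simpa using Complex.normSq_eq_zero.mp (hz j i)
    have hCD : C * Dᴴ = 0 := by
      have := congrArg Matrix.conjTranspose hDC
      simpa using this
    rw [hC, hD, Matrix.mul_assoc, ← Matrix.mul_assoc C, hCD]
    simp [Matrix.mul_assoc]

/-- An `M`-outcome POVM on `ℂ^n`. -/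
def IsPOVM {n M : ℕ} (P : Fin M → Matrix (Fin n) (Fin n) ℂ) : Prop :=
  (∀ m, (P m).PosSemidef) ∧ ∑ m, P m = 1

theorem stmt_16 {n M : ℕ} (z : Fin M → Matrix (Fin n) (Fin n) ℂ)
    (hz : ∀ m, (z m).PosSemidef)
    (X : Matrix (Fin n) (Fin n) ℂ) (hXpsd : X.PosSemidef)
    (hXz : ∀ m, (X - z m).PosSemidef)
    (P : Fin M → Matrix (Fin n) (Fin n) ℂ) (hP : IsPOVM P)
    (hPopt : ∀ Q, IsPOVM Q →
      ∑ m, (Matrix.trace (z m * Q m)).re ≤ ∑ m, (Matrix.trace (z m * P m)).re)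
    -- strong duality: the dual optimal value equals the primal one
    (hstrong : Matrix.trace X = ∑ m, Matrix.trace (z m * P m)) :
    ∀ m, (X - z m) * P m = 0 := by
  choose r hr0 hrtr hrz using fun m => psd_trace_mul (hXz m) (hP.1 m)
  have hsum : ∑ m, Matrix.trace ((X - z m) * P m) = 0 := by
    simp only [Matrix.sub_mul, Matrix.trace_sub, Finset.sum_sub_distrib]
    rw [← Matrix.trace_sum, ← Finset.mul_sum, hP.2, mul_one, hstrong, sub_self]
  rw [Finset.sum_congr rfl (fun m _ => hrtr m)] at hsum
  norm_cast at hsum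
  intro m
  exact hrz m ((Finset.sum_eq_zero_iff_of_nonneg (fun m _ => hr0 m)).mp hsum m
    (Finset.mem_univ m))
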